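/- For all integers m ≥ n ≥ 1, strong duality holds between the semidefinite programs (SDP^{m,≥}_n) and (D-SDP^{m,≥}_n): the supremum of F_n over all feasible pairs (A, F) of the primal program equals the infimum of y over all feasible triples (Q, μ, y) of the dual program. -/

import Mathlib

open Finset Matrix


private lemma sd_trinom {a l b : ℕ} (hbl : b ≤ l) (hla : l ≤ a) :
    a.choose l * l.choose b = a.choose b * (a-b).choose (l-b) := by
  have hba : b ≤ a := le_trans hbl hla
  have key : a.choose l * l.choose b * (b.factorial * (l-b).factorial * (a-l).factorial)
      = a.choose b * (a-b).choose (l-b) * (b.factorial * (l-b).factorial * (a-l).factorial) := by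
    have h1 : a.choose l * l.factorial * (a-l).factorial = a.factorial :=
      Nat.choose_mul_factorial_mul_factorial hla
    have h2 : l.choose b * b.factorial * (l-b).factorial = l.factorial :=
      Nat.choose_mul_factorial_mul_factorial hbl
    have h3 : a.choose b * b.factorial * (a-b).factorial = a.factorial :=
      Nat.choose_mul_factorial_mul_factorial hba
    have h4 : (a-b).choose (l-b) * (l-b).factorial * ((a-b)-(l-b)).factorial = (a-b).factorial :=
      Nat.choose_mul_factorial_mul_factorial (by omega)
    have h5 : (a-b)-(l-b) = a - l := by omega
    rw [h5] at h4
    calc a.choose l * l.choose b * (b.factorial * (l-b).factorial * (a-l).factorial)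
        = (l.choose b * b.factorial * (l-b).factorial) * a.choose l * (a-l).factorial := by ring
      _ = l.factorial * a.choose l * (a-l).factorial := by rw [h2]
      _ = a.choose l * l.factorial * (a-l).factorial := by ring
      _ = a.factorial := h1
      _ = a.choose b * b.factorial * (a-b).factorial := h3.symm
      _ = a.choose b * b.factorial * ((a-b).choose (l-b) * (l-b).factorial * (a-l).factorial) := by
          rw [h4]
      _ = a.choose b * (a-b).choose (l-b) * (b.factorial * (l-b).factorial * (a-l).factorial) := by
          ring
  exact Nat.eq_of_mul_eq_mul_right (by positivity) key

private lemma sd_alt_id {K a : ℕ} (b : ℕ) (ha : a < K) :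
    ∑ l ∈ range K, (-1:ℝ)^(a+l) * (a.choose l) * (l.choose b) = if a = b then 1 else 0 := by
  have hsub : range (a+1) ⊆ range K := by
    intro x hx; simp only [mem_range] at *; omega
  rw [← Finset.sum_subset hsub (by
    intro x hx hx2
    simp only [mem_range] at hx hx2
    have : a.choose x = 0 := Nat.choose_eq_zero_of_lt (by omega)
    simp [this])]
  by_cases hba : b ≤ a
  · have hsub2 : Ico b (a+1) ⊆ range (a+1) := by
      intro x hx; simp only [mem_range, mem_Ico] at *; omega
    rw [← Finset.sum_subset hsub2 (by
      intro x hx hx2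
      simp only [mem_range, mem_Ico] at hx hx2
      have : x.choose b = 0 := Nat.choose_eq_zero_of_lt (by omega)
      simp [this])]
    rw [Finset.sum_Ico_eq_sum_range]
    have hlen : a + 1 - b = (a - b) + 1 := by omega
    rw [hlen]
    have hterm : ∀ j ∈ range ((a-b)+1),
        (-1:ℝ)^(a+(b+j)) * (a.choose (b+j)) * ((b+j).choose b)
          = ((-1:ℝ)^(a+b) * (a.choose b)) * ((-1:ℝ)^j * ((a-b).choose j)) := by
      intro j hj
      simp only [mem_range] at hj
      have := sd_trinom ((by omega : b ≤ b + j)) (show b + j ≤ a by omega)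
      have h2 : (b+j) - b = j := by omega
      rw [h2] at this
      have : ((a.choose (b+j) * (b+j).choose b : ℕ) : ℝ) = (a.choose b : ℝ) * ((a-b).choose j : ℝ) := by
        rw [this]; push_cast; ring
      push_cast at this ⊢
      calc (-1:ℝ)^(a+(b+j)) * (a.choose (b+j)) * ((b+j).choose b)
          = (-1:ℝ)^(a+b) * (-1:ℝ)^j * ((a.choose (b+j) : ℝ) * ((b+j).choose b : ℝ)) := by
            rw [← pow_add]; ring_nf
        _ = (-1:ℝ)^(a+b) * (-1:ℝ)^j * ((a.choose b : ℝ) * ((a-b).choose j : ℝ)) := by rw [this]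
        _ = ((-1:ℝ)^(a+b) * (a.choose b)) * ((-1:ℝ)^j * ((a-b).choose j)) := by ring
    rw [Finset.sum_congr rfl hterm, ← Finset.mul_sum]
    have halt : ∑ j ∈ range ((a-b)+1), (-1:ℝ)^j * ((a-b).choose j)
        = if a - b = 0 then 1 else 0 := by
      calc ∑ j ∈ range ((a-b)+1), (-1:ℝ)^j * ((a-b).choose j)
          = ((∑ j ∈ range ((a-b)+1), (-1:ℤ)^j * ((a-b).choose j) : ℤ) : ℝ) := by
            push_cast; rfl
        _ = ((if a-b=0 then (1:ℤ) else 0 : ℤ) : ℝ) := by rw [Int.alternating_sum_range_choose]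
        _ = if a-b=0 then (1:ℝ) else 0 := by split_ifs <;> simp
    rw [halt]
    by_cases hab : a = b
    · subst hab; simp
    · rw [if_neg (by omega), if_neg hab]; ring
  · have : ∀ l ∈ range (a+1), (-1:ℝ)^(a+l) * (a.choose l) * (l.choose b) = 0 := by
      intro l hl
      simp only [mem_range] at hl
      have : l.choose b = 0 := Nat.choose_eq_zero_of_lt (by omega)
      simp [this]
    rw [Finset.sum_congr rfl this, Finset.sum_const_zero, if_neg (by omega)]

private lemma sd_alt_id' {K a : ℕ} (b : ℕ) (ha : a < K) :
    ∑ k ∈ range K, (-1:ℝ)^(k+b) * (a.choose k) * (k.choose b) = if a = b then 1 else 0 := by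
  have h : ∀ k ∈ range K, (-1:ℝ)^(k+b) * (a.choose k) * (k.choose b)
      = (-1:ℝ)^(a+b) * ((-1:ℝ)^(a+k) * (a.choose k) * (k.choose b)) := by
    intro k hk
    have : (-1:ℝ)^(a+b) * (-1:ℝ)^(a+k) = (-1:ℝ)^(k+b) := by
      rw [← pow_add]
      have : a + b + (a + k) = 2*a + (k+b) := by ring
      rw [this, pow_add, pow_mul]
      norm_num
    rw [← mul_assoc, ← mul_assoc, this]
  rw [Finset.sum_congr rfl h, ← Finset.mul_sum, sd_alt_id b ha]
  by_cases hab : a = b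
  · subst hab; simp [← two_mul, pow_mul]
  · simp [hab]

private lemma sd_vand {a b K : ℕ} (hb : b < K) :
    (∑ c ∈ range K, a.choose c * b.choose c) = (a+b).choose b := by
  have hsub : range (b+1) ⊆ range K := by intro x hx; simp only [mem_range] at *; omega
  rw [← Finset.sum_subset hsub (by
    intro x hx hx2
    simp only [mem_range] at hx hx2
    have : b.choose x = 0 := Nat.choose_eq_zero_of_lt (by omega)
    simp [this])]
  rw [Nat.add_choose_eq, Nat.sum_antidiagonal_eq_sum_range_succ_mk]
  refine Finset.sum_congr rfl fun c hc => ?_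
  simp only [mem_range] at hc
  rw [Nat.choose_symm (by omega)]

private lemma sd_vand' {a b K : ℕ} (hb : b < K) :
    (∑ c ∈ range K, (a+1).choose (c+1) * b.choose c) = (a+b+1).choose (b+1) := by
  have hsub : range (b+1) ⊆ range K := by intro x hx; simp only [mem_range] at *; omega
  rw [← Finset.sum_subset hsub (by
    intro x hx hx2
    simp only [mem_range] at hx hx2
    have : b.choose x = 0 := Nat.choose_eq_zero_of_lt (by omega)
    simp [this])]
  calc ∑ c ∈ range (b+1), (a+1).choose (c+1) * b.choose c
      = ∑ c ∈ range (b+1), (a+1).choose (c+1) * b.choose (b+1-(c+1)) := by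
        refine Finset.sum_congr rfl fun c hc => ?_
        simp only [mem_range] at hc
        congr 1
        have h1 : b + 1 - (c+1) = b - c := by omega
        rw [h1, Nat.choose_symm (by omega)]
    _ = (∑ c ∈ range (b+1), (a+1).choose (c+1) * b.choose (b+1-(c+1)))
          + (a+1).choose 0 * b.choose (b+1-0) := by
        simp [Nat.choose_eq_zero_of_lt (by omega : b < b+1)]
    _ = ∑ k ∈ range ((b+1)+1), (a+1).choose k * b.choose (b+1-k) :=
        (Finset.sum_range_succ' (fun k => (a+1).choose k * b.choose (b+1-k)) (b+1)).symm
    _ = (a+b+1).choose (b+1) := by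
        have h2 : a + b + 1 = (a+1) + b := by omega
        rw [h2, Nat.add_choose_eq, Nat.sum_antidiagonal_eq_sum_range_succ_mk]

private def sdM (m : ℕ) (x : Fin (m+1) → ℝ) : Matrix (Fin (m+1)) (Fin (m+1)) ℝ :=
  Matrix.of fun i j => if (i.1+j.1) % 2 = 0 then
      ∑ k : Fin (m+1), x k * (((i.1+j.1)/2).choose k.1 : ℝ) * ((((i.1+j.1)/2).factorial : ℕ) : ℝ)
    else 0

private lemma sdM_apply (m : ℕ) (x : Fin (m+1) → ℝ) (i j : Fin (m+1)) :
    sdM m x i j = if (i.1+j.1) % 2 = 0 then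
      ∑ k : Fin (m+1), x k * (((i.1+j.1)/2).choose k.1 : ℝ) * ((((i.1+j.1)/2).factorial : ℕ) : ℝ)
    else 0 := rfl

private def sde (m : ℕ) (k : Fin (m+1)) : Fin (m+1) → ℝ := fun k' => if k' = k then 1 else 0

private lemma sde_mem (m : ℕ) (k : Fin (m+1)) : sde m k ∈ stdSimplex ℝ (Fin (m+1)) := by
  constructor
  · intro x; unfold sde; split_ifs <;> norm_num
  · simp [sde]

private lemma sdM_sde (m : ℕ) (k : Fin (m+1)) (i j : Fin (m+1)) :
    sdM m (sde m k) i j = if (i.1+j.1) % 2 = 0 then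
      (((i.1+j.1)/2).choose k.1 : ℝ) * ((((i.1+j.1)/2).factorial : ℕ) : ℝ) else 0 := by
  rw [sdM_apply]
  congr 1
  rw [Finset.sum_eq_single k]
  · simp [sde]
  · intro b _ hb; simp [sde, hb]
  · intro h; exact absurd (Finset.mem_univ k) h

private lemma sd_key1 {a b K : ℕ} (hb : b < K) :
    ∑ c ∈ range K, (a.factorial * a.choose c) * (b.factorial * b.choose c)
      = (a+b).factorial := by
  have h1 : ∑ c ∈ range K, (a.factorial * a.choose c) * (b.factorial * b.choose c)
      = a.factorial * b.factorial * ∑ c ∈ range K, a.choose c * b.choose c := by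
    rw [Finset.mul_sum]; refine Finset.sum_congr rfl fun c _ => by ring
  rw [h1, sd_vand hb]
  have := Nat.choose_mul_factorial_mul_factorial (Nat.le_add_left b a)
  rw [Nat.add_sub_cancel] at this
  calc a.factorial * b.factorial * (a+b).choose b
      = (a+b).choose b * b.factorial * a.factorial := by ring
    _ = (a+b).factorial := this

private lemma sd_key2 {a b K : ℕ} (hb : b < K) :
    ∑ c ∈ range K, ((c:ℝ)+1)⁻¹ * (((a+1).factorial : ℝ) * (a.choose c : ℝ))
        * (((b+1).factorial : ℝ) * (b.choose c : ℝ))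
      = ((a+b+1).factorial : ℝ) := by
  have hterm : ∀ c ∈ range K, ((c:ℝ)+1)⁻¹ * (((a+1).factorial : ℝ) * (a.choose c : ℝ))
        * (((b+1).factorial : ℝ) * (b.choose c : ℝ))
      = ((a.factorial : ℝ) * ((b+1).factorial : ℝ)) * (((a+1).choose (c+1) * b.choose c : ℕ) : ℝ) := by
    intro c _
    have h := Nat.add_one_mul_choose_eq a c
    have hr : ((a:ℝ)+1) * (a.choose c) = ((a+1).choose (c+1) : ℝ) * ((c:ℝ)+1) := by
      exact_mod_cast congrArg (fun z : ℕ => (z : ℝ)) h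
    have hfac : ((a+1).factorial : ℝ) = ((a:ℝ)+1) * (a.factorial : ℝ) := by
      rw [Nat.factorial_succ]; push_cast; ring
    have hc1 : ((c:ℝ)+1) ≠ 0 := by positivity
    push_cast
    rw [hfac]
    field_simp
    linear_combination (b.choose c : ℝ) * hr
  rw [Finset.sum_congr rfl hterm, ← Finset.mul_sum]
  have : ∑ c ∈ range K, (((a+1).choose (c+1) * b.choose c : ℕ) : ℝ)
      = (((a+b+1).choose (b+1) : ℕ) : ℝ) := by
    rw [← Nat.cast_sum]
    exact_mod_cast congrArg (fun z : ℕ => (z : ℝ)) (sd_vand' hb)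
  rw [this]
  have h2 := Nat.choose_mul_factorial_mul_factorial (show b+1 ≤ a+b+1 by omega)
  have h3 : a+b+1-(b+1) = a := by omega
  rw [h3] at h2
  calc (a.factorial : ℝ) * ((b+1).factorial : ℝ) * ((a+b+1).choose (b+1) : ℝ)
      = (((a+b+1).choose (b+1) * (b+1).factorial * a.factorial : ℕ) : ℝ) := by push_cast; ring
    _ = ((a+b+1).factorial : ℝ) := by rw [h2]

private noncomputable def sdB (m : ℕ) : Matrix (Fin (m+1) × Bool) (Fin (m+1)) ℝ :=
  Matrix.of fun p i =>
    if p.2 then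
      (if i.1 % 2 = 1 then
        Real.sqrt (((p.1.1:ℝ)+1)⁻¹) * (((i.1/2 + 1).factorial * (i.1/2).choose p.1.1 : ℕ) : ℝ)
      else 0)
    else
      (if i.1 % 2 = 0 then (((i.1/2).factorial * (i.1/2).choose p.1.1 : ℕ) : ℝ) else 0)

private lemma sdA0_psd (m : ℕ) : (sdM m (sde m ⟨0, by omega⟩)).PosSemidef := by
  have hBB : sdM m (sde m ⟨0, by omega⟩) = (sdB m)ᴴ * (sdB m) := by
    ext i j
    rw [Matrix.mul_apply, sdM_sde]
    have hsum : ∀ f : Fin (m+1) × Bool → ℝ, ∑ p : Fin (m+1) × Bool, f p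
        = ∑ c : Fin (m+1), (f (c, false) + f (c, true)) := by
      intro f
      rw [Fintype.sum_prod_type]
      refine Finset.sum_congr rfl fun c _ => ?_
      rw [Fintype.sum_bool]; ring
    rw [hsum fun p => ((sdB m)ᴴ : Matrix (Fin (m+1)) (Fin (m+1) × Bool) ℝ) i p * (sdB m) p j]
    simp only [Matrix.conjTranspose_apply, star_trivial, sdB, Matrix.of_apply]
    rcases Nat.even_or_odd i.1 with hi | hi <;> rcases Nat.even_or_odd j.1 with hj | hj
    · -- even, even
      have hi2 : i.1 % 2 = 0 := Nat.even_iff.mp hi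
      have hj2 : j.1 % 2 = 0 := Nat.even_iff.mp hj
      have hij : (i.1 + j.1) % 2 = 0 := by omega
      simp only [hi2, hj2, hij, if_true, if_false, reduceIte, Bool.false_eq_true]
      norm_num
      rw [show (i.1+j.1)/2 = i.1/2 + j.1/2 by omega,
        Fin.sum_univ_eq_sum_range
          (fun c => ((i.1/2).factorial : ℝ) * ((i.1/2).choose c : ℝ)
            * (((j.1/2).factorial : ℝ) * ((j.1/2).choose c : ℝ))) (m+1)]
      have hkey := sd_key1 (a := i.1/2) (K := m+1) (show j.1/2 < m+1 by omega)
      exact_mod_cast congrArg (fun z : ℕ => (z : ℝ)) hkey.symm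
    · -- even, odd
      have hi2 : i.1 % 2 = 0 := Nat.even_iff.mp hi
      have hj2 : j.1 % 2 = 1 := Nat.odd_iff.mp hj
      have hij : ¬ ((i.1 + j.1) % 2 = 0) := by omega
      simp only [hi2, hj2, hij, if_true, if_false, reduceIte, Bool.false_eq_true]
      simp
    · -- odd, even
      have hi2 : i.1 % 2 = 1 := Nat.odd_iff.mp hi
      have hj2 : j.1 % 2 = 0 := Nat.even_iff.mp hj
      have hij : ¬ ((i.1 + j.1) % 2 = 0) := by omega
      simp only [hi2, hj2, hij, if_true, if_false, reduceIte, Bool.false_eq_true]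
      simp
    · -- odd, odd
      have hi2 : i.1 % 2 = 1 := Nat.odd_iff.mp hi
      have hj2 : j.1 % 2 = 1 := Nat.odd_iff.mp hj
      have hij : (i.1 + j.1) % 2 = 0 := by omega
      simp only [hi2, hj2, hij, if_true, if_false, reduceIte, Bool.false_eq_true]
      norm_num
      rw [show (i.1+j.1)/2 = i.1/2 + j.1/2 + 1 by omega]
      have hterm : ∀ c : Fin (m+1),
          (Real.sqrt ((c.1:ℝ)+1))⁻¹ * (((i.1/2 + 1).factorial : ℝ) * ((i.1/2).choose c.1 : ℝ))
            * ((Real.sqrt ((c.1:ℝ)+1))⁻¹ * (((j.1/2 + 1).factorial : ℝ) * ((j.1/2).choose c.1 : ℝ)))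
          = ((c.1:ℝ)+1)⁻¹ * (((i.1/2 + 1).factorial : ℝ) * ((i.1/2).choose c.1 : ℝ))
            * (((j.1/2 + 1).factorial : ℝ) * ((j.1/2).choose c.1 : ℝ)) := by
        intro c
        have hs : (Real.sqrt ((c.1:ℝ)+1))⁻¹ * (Real.sqrt ((c.1:ℝ)+1))⁻¹ = ((c.1:ℝ)+1)⁻¹ := by
          rw [← mul_inv, Real.mul_self_sqrt (by positivity)]
        calc (Real.sqrt ((c.1:ℝ)+1))⁻¹ * (((i.1/2 + 1).factorial : ℝ) * ((i.1/2).choose c.1 : ℝ))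
              * ((Real.sqrt ((c.1:ℝ)+1))⁻¹ * (((j.1/2 + 1).factorial : ℝ) * ((j.1/2).choose c.1 : ℝ)))
            = ((Real.sqrt ((c.1:ℝ)+1))⁻¹ * (Real.sqrt ((c.1:ℝ)+1))⁻¹)
                * ((((i.1/2 + 1).factorial : ℝ) * ((i.1/2).choose c.1 : ℝ))
                  * (((j.1/2 + 1).factorial : ℝ) * ((j.1/2).choose c.1 : ℝ))) := by ring
          _ = _ := by rw [hs]; ring
      rw [Finset.sum_congr rfl fun c _ => hterm c,
        Fin.sum_univ_eq_sum_range
          (fun c => ((c:ℝ)+1)⁻¹ * (((i.1/2 + 1).factorial : ℝ) * ((i.1/2).choose c : ℝ))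
            * (((j.1/2 + 1).factorial : ℝ) * ((j.1/2).choose c : ℝ))) (m+1),
        sd_key2 (show j.1/2 < m+1 by omega)]
  rw [hBB]
  exact Matrix.posSemidef_conjTranspose_mul_self _

private def sdq (m : ℕ) (Q : Matrix (Fin (m+1)) (Fin (m+1)) ℝ) (l : ℕ) : ℝ :=
  ∑ i : Fin (m+1), ∑ j : Fin (m+1), if i.1+j.1 = 2*l then Q i j else 0

private lemma sd_group (m : ℕ) (Q : Matrix (Fin (m+1)) (Fin (m+1)) ℝ) (g : ℕ → ℝ) :
    ∑ i : Fin (m+1), ∑ j : Fin (m+1), Q i j * (if (i.1+j.1) % 2 = 0 then g ((i.1+j.1)/2) else 0)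
      = ∑ l ∈ range (m+1), (sdq m Q l) * g l := by
  symm
  have h1 : ∀ l ∈ range (m+1), sdq m Q l * g l
      = ∑ i : Fin (m+1), ∑ j : Fin (m+1), (if i.1+j.1 = 2*l then Q i j * g l else 0) := by
    intro l _
    rw [sdq, Finset.sum_mul]
    refine Finset.sum_congr rfl fun i _ => ?_
    rw [Finset.sum_mul]
    refine Finset.sum_congr rfl fun j _ => ?_
    rw [ite_mul, zero_mul]
  rw [Finset.sum_congr rfl h1, Finset.sum_comm]
  refine Finset.sum_congr rfl fun i _ => ?_
  rw [Finset.sum_comm]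
  refine Finset.sum_congr rfl fun j _ => ?_
  by_cases hp : (i.1+j.1) % 2 = 0
  · rw [Finset.sum_eq_single ((i.1+j.1)/2)]
    · rw [if_pos (by omega), if_pos hp]
    · intro l _ hne; rw [if_neg (by omega)]
    · intro h
      exact absurd (Finset.mem_range.mpr (by omega : (i.1+j.1)/2 < m+1)) h
  · rw [if_neg hp, mul_zero]
    apply Finset.sum_eq_zero; intro l _; rw [if_neg (by omega)]

open scoped MatrixOrder in
private lemma sd_pairing_nonneg (m : ℕ) {P Q : Matrix (Fin (m+1)) (Fin (m+1)) ℝ}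
    (hP : P.PosSemidef) (hQ : Q.PosSemidef) :
    0 ≤ ∑ i : Fin (m+1), ∑ j : Fin (m+1), Q i j * P i j := by
  classical
  set B := CFC.sqrt Q with hBdef
  have hB : B.PosSemidef := (CFC.sqrt_nonneg Q).posSemidef
  have hQB : B * B = Q := by have := CFC.sq_sqrt Q hQ.nonneg; rwa [pow_two] at this
  have hsymm : ∀ a b, B a b = B b a := by
    intro a b
    have := congrFun (congrFun hB.1 a) b
    simpa [Matrix.conjTranspose_apply] using this.symm
  have h1 : ∀ i j : Fin (m+1), Q i j * P i j = ∑ c : Fin (m+1), B c i * B c j * P i j := by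
    intro i j
    rw [← hQB, Matrix.mul_apply, Finset.sum_mul]
    refine Finset.sum_congr rfl fun c _ => ?_
    rw [hsymm i c]
  calc (0:ℝ) ≤ ∑ c : Fin (m+1), ∑ i : Fin (m+1), ∑ j : Fin (m+1), B c i * B c j * P i j := by
        refine Finset.sum_nonneg fun c _ => ?_
        have h2 := hP.dotProduct_mulVec_nonneg (fun i => B c i)
        simp only [dotProduct, Matrix.mulVec, Pi.star_apply, star_trivial] at h2
        calc (0:ℝ) ≤ ∑ i : Fin (m+1), B c i * ∑ j : Fin (m+1), P i j * B c j := h2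
          _ = ∑ i : Fin (m+1), ∑ j : Fin (m+1), B c i * B c j * P i j := by
              refine Finset.sum_congr rfl fun i _ => ?_
              rw [Finset.mul_sum]
              refine Finset.sum_congr rfl fun j _ => ?_
              ring
    _ = ∑ i : Fin (m+1), ∑ j : Fin (m+1), Q i j * P i j := by
        rw [Finset.sum_comm]
        refine Finset.sum_congr rfl fun i _ => ?_
        rw [Finset.sum_comm]
        refine Finset.sum_congr rfl fun j _ => ?_
        exact (h1 i j).symm

private lemma sd_pair (m : ℕ) (Q : Matrix (Fin (m+1)) (Fin (m+1)) ℝ) (x : Fin (m+1) → ℝ) :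
    ∑ i : Fin (m+1), ∑ j : Fin (m+1), Q i j * sdM m x i j
      = ∑ l ∈ range (m+1), (sdq m Q l)
          * (∑ k : Fin (m+1), x k * (l.choose k.1 : ℝ) * (l.factorial : ℝ)) :=
  sd_group m Q (fun l => ∑ k : Fin (m+1), x k * (l.choose k.1 : ℝ) * (l.factorial : ℝ))

private lemma sd_swap {β : Type*} [Fintype β] (K : ℕ) (f : ℕ → ℕ → β → ℝ) :
    ∑ l ∈ range K, ∑ k ∈ range K, ∑ k' : β, f l k k'
      = ∑ k' : β, ∑ k ∈ range K, ∑ l ∈ range K, f l k k' :=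
  calc ∑ l ∈ range K, ∑ k ∈ range K, ∑ k' : β, f l k k'
      = ∑ k ∈ range K, ∑ l ∈ range K, ∑ k' : β, f l k k' := Finset.sum_comm
    _ = ∑ k ∈ range K, ∑ k' : β, ∑ l ∈ range K, f l k k' :=
        Finset.sum_congr rfl fun k _ => Finset.sum_comm
    _ = ∑ k' : β, ∑ k ∈ range K, ∑ l ∈ range K, f l k k' := Finset.sum_comm

private lemma sd_weak (m n : ℕ) (hn : 1 ≤ n) (hmn : n ≤ m)
    (x : Fin (m+1) → ℝ) (hx : x ∈ stdSimplex ℝ (Fin (m+1))) (hpsd : (sdM m x).PosSemidef)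
    (Q : Matrix (Fin (m+1)) (Fin (m+1)) ℝ) (μ : ℕ → ℝ) (y : ℝ)
    (hQ : Q.PosSemidef) (hy1 : 1 + μ n ≤ y) (hy2 : ∀ k ≤ m, μ k ≤ y)
    (hc : ∀ l ≤ m, sdq m Q l
      = ∑ k ∈ Icc l m, ((-1:ℝ)^(k+l) / (l.factorial : ℝ)) * (k.choose l : ℝ) * μ k) :
    x ⟨n, by omega⟩ ≤ y := by
  classical
  set n' : Fin (m+1) := ⟨n, by omega⟩ with hn'
  set S := ∑ i : Fin (m+1), ∑ j : Fin (m+1), Q i j * sdM m x i j with hSdef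
  have hS0 : 0 ≤ S := sd_pairing_nonneg m hpsd hQ
  have hS2 : S = ∑ k' : Fin (m+1), μ k'.1 * x k' := by
    calc S = ∑ l ∈ range (m+1), (sdq m Q l)
          * (∑ k' : Fin (m+1), x k' * (l.choose k'.1 : ℝ) * (l.factorial : ℝ)) := sd_pair m Q x
      _ = ∑ l ∈ range (m+1), ∑ k ∈ range (m+1), ∑ k' : Fin (m+1),
            ((-1:ℝ)^(k+l) * (k.choose l) * (l.choose k'.1)) * (μ k * x k') := by
          refine Finset.sum_congr rfl fun l hl => ?_
          have hlm : l ≤ m := by simp only [mem_range] at hl; omega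
          rw [hc l hlm]
          have hext : ∑ k ∈ Icc l m, ((-1:ℝ)^(k+l) / (l.factorial : ℝ)) * (k.choose l : ℝ) * μ k
              = ∑ k ∈ range (m+1), ((-1:ℝ)^(k+l) / (l.factorial : ℝ)) * (k.choose l : ℝ) * μ k := by
            apply Finset.sum_subset
            · intro k hk; simp only [mem_Icc, mem_range] at *; omega
            · intro k hk1 hk2
              simp only [mem_Icc, mem_range] at hk1 hk2
              have : k.choose l = 0 := Nat.choose_eq_zero_of_lt (by omega)
              simp [this]
          rw [hext, Finset.sum_mul]
          refine Finset.sum_congr rfl fun k _ => ?_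
          rw [Finset.mul_sum]
          refine Finset.sum_congr rfl fun k' _ => ?_
          have hfac : ((l.factorial : ℕ) : ℝ) ≠ 0 := by
            have := Nat.factorial_pos l; positivity
          field_simp
      _ = ∑ k' : Fin (m+1), ∑ k ∈ range (m+1),
            (∑ l ∈ range (m+1), (-1:ℝ)^(k+l) * (k.choose l) * (l.choose k'.1)) * (μ k * x k') := by
          rw [sd_swap (m+1)
            (fun l k k' => ((-1:ℝ)^(k+l) * (k.choose l) * (l.choose k'.1)) * (μ k * x k'))]
          refine Finset.sum_congr rfl fun k' _ => Finset.sum_congr rfl fun k _ => ?_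
          rw [Finset.sum_mul]
      _ = ∑ k' : Fin (m+1), μ k'.1 * x k' := by
          refine Finset.sum_congr rfl fun k' _ => ?_
          have hstep : ∀ k ∈ range (m+1),
              (∑ l ∈ range (m+1), (-1:ℝ)^(k+l) * (k.choose l) * (l.choose k'.1)) * (μ k * x k')
              = if k = k'.1 then μ k * x k' else 0 := by
            intro k hk
            simp only [mem_range] at hk
            rw [sd_alt_id k'.1 hk]
            split_ifs <;> ring
          rw [Finset.sum_congr rfl hstep, Finset.sum_ite_eq' (range (m+1)) k'.1
            (fun k => μ k * x k')]
          rw [if_pos (Finset.mem_range.mpr k'.2)]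
  -- final inequality
  have hsum1 : ∑ k : Fin (m+1), x k = 1 := hx.2
  have hxn : ∀ k, 0 ≤ x k := hx.1
  have key : ∑ k : Fin (m+1), (μ k.1 * x k + (if k = n' then x k else 0))
      ≤ ∑ k : Fin (m+1), x k * y := by
    refine Finset.sum_le_sum fun k _ => ?_
    by_cases hkn : k = n'
    · subst hkn
      rw [if_pos rfl]
      have : μ n + 1 ≤ y := by linarith
      calc μ (⟨n, by omega⟩ : Fin (m+1)).1 * x (⟨n, by omega⟩ : Fin (m+1))
            + x (⟨n, by omega⟩ : Fin (m+1)) = x _ * (μ n + 1) := by ring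
        _ ≤ x _ * y := mul_le_mul_of_nonneg_left this (hxn _)
        _ = x _ * y := rfl
    · rw [if_neg hkn, add_zero]
      calc μ k.1 * x k = x k * μ k.1 := by ring
        _ ≤ x k * y := mul_le_mul_of_nonneg_left (hy2 k.1 (by omega)) (hxn k)
  have hL : ∑ k : Fin (m+1), (μ k.1 * x k + (if k = n' then x k else 0)) = S + x n' := by
    rw [Finset.sum_add_distrib, ← hS2]
    congr 1
    rw [Finset.sum_ite_eq' Finset.univ n' (fun k => x k), if_pos (Finset.mem_univ n')]
  have hR : ∑ k : Fin (m+1), x k * y = y := by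
    rw [← Finset.sum_mul, hsum1, one_mul]
  rw [hL, hR] at key
  linarith

variable (m : ℕ)

private abbrev sdE (m : ℕ) := ((Fin (m+1) → Fin (m+1) → ℝ) × ℝ)

-- representation of continuous linear functionals
private lemma sd_rep (f : (sdE m) →L[ℝ] ℝ) (p : sdE m) :
    f p = (∑ i : Fin (m+1), ∑ j : Fin (m+1),
        p.1 i j * f (Pi.single i (Pi.single j 1), 0)) + p.2 * f (0, 1) := by
  have hsplit : p = ((p.1, 0) : sdE m) + ((0, p.2) : sdE m) := by
    ext <;> simp
  have h2 : ((0, p.2) : sdE m) = p.2 • ((0,1) : sdE m) := by ext <;> simp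
  have h1 : ((p.1, 0) : sdE m) = ∑ i : Fin (m+1), ∑ j : Fin (m+1),
      (p.1 i j) • ((Pi.single i (Pi.single j 1), 0) : sdE m) := by
    apply Prod.ext
    · simp only [Prod.fst_sum, Prod.smul_mk]
      funext a
      rw [Finset.sum_apply]
      funext b
      rw [Finset.sum_apply]
      have : ∀ i : Fin (m+1), (∑ j : Fin (m+1),
          (p.1 i j) • (Pi.single i (Pi.single j 1) : Fin (m+1) → Fin (m+1) → ℝ)) a b
          = if a = i then p.1 i b else 0 := by
        intro i
        rw [Finset.sum_apply, Finset.sum_apply]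
        by_cases hai : a = i
        · subst hai
          simp only [Pi.smul_apply, Pi.single_eq_same]
          rw [Finset.sum_eq_single b]
          · simp
          · intro c _ hc; simp [Pi.single_apply, hc]
          · intro h; exact absurd (Finset.mem_univ b) h
        · simp [Pi.single_apply, hai]
      rw [Finset.sum_congr rfl fun i _ => this i, Finset.sum_ite_eq Finset.univ a (fun i => p.1 i b),
        if_pos (Finset.mem_univ a)]
    · simp only [Prod.snd_sum, Prod.smul_mk]
      simp
  have e1 : f (((p.1, 0) : sdE m) + ((0, p.2) : sdE m)) = f ((p.1, 0) : sdE m) + f ((0, p.2) : sdE m) :=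
    map_add f _ _
  rw [← hsplit] at e1
  calc f p = f ((p.1, 0) : sdE m) + f ((0, p.2) : sdE m) := e1
    _ = _ := by
      rw [h1, h2, map_sum, _root_.map_smul]
      simp only [smul_eq_mul]
      congr 1
      refine Finset.sum_congr rfl fun i _ => ?_
      rw [map_sum]
      refine Finset.sum_congr rfl fun j _ => ?_
      rw [_root_.map_smul, smul_eq_mul]

private lemma sd_psd_iff (M : Matrix (Fin (m+1)) (Fin (m+1)) ℝ) :
    M.PosSemidef ↔ ((∀ i j, M j i = M i j) ∧
      ∀ x : Fin (m+1) → ℝ, 0 ≤ ∑ i, x i * ∑ j, M i j * x j) := by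
  constructor
  · intro hM
    constructor
    · intro i j
      have := congrFun (congrFun hM.1 i) j
      simpa [Matrix.conjTranspose_apply] using this
    · intro x
      have h2 := hM.dotProduct_mulVec_nonneg x
      simpa [dotProduct, Matrix.mulVec, Pi.star_apply, star_trivial] using h2
  · rintro ⟨hsym, hform⟩
    rw [Matrix.posSemidef_iff_dotProduct_mulVec]
    constructor
    · ext i j
      simp only [Matrix.conjTranspose_apply, star_trivial]
      exact (hsym j i).symm
    · intro x
      have := hform x
      simpa [dotProduct, Matrix.mulVec, Pi.star_apply, star_trivial] using this

private lemma sd_psd_closed :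
    IsClosed {M : Fin (m+1) → Fin (m+1) → ℝ | (Matrix.of M).PosSemidef} := by
  have hset : {M : Fin (m+1) → Fin (m+1) → ℝ | (Matrix.of M).PosSemidef}
      = (⋂ (i : Fin (m+1)) (j : Fin (m+1)), {M : Fin (m+1) → Fin (m+1) → ℝ | M j i = M i j})
        ∩ (⋂ x : Fin (m+1) → ℝ,
            {M : Fin (m+1) → Fin (m+1) → ℝ | 0 ≤ ∑ i, x i * ∑ j, M i j * x j}) := by
    ext M
    simp only [Set.mem_setOf_eq, Set.mem_inter_iff, Set.mem_iInter]
    exact sd_psd_iff m (Matrix.of M)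
  rw [hset]
  have hcont : ∀ i j : Fin (m+1), Continuous fun M : Fin (m+1) → Fin (m+1) → ℝ => M i j :=
    fun i j => (continuous_apply j).comp (continuous_apply i)
  apply IsClosed.inter
  · exact isClosed_iInter fun i => isClosed_iInter fun j =>
      isClosed_eq (hcont j i) (hcont i j)
  · refine isClosed_iInter fun x => isClosed_le continuous_const ?_
    exact continuous_finset_sum _ fun i _ => Continuous.mul continuous_const
      (continuous_finset_sum _ fun j _ => (hcont i j).mul continuous_const)

private lemma sd_psd_smul {A : Matrix (Fin (m+1)) (Fin (m+1)) ℝ} (hA : A.PosSemidef)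
    {c : ℝ} (hc : 0 ≤ c) : (c • A).PosSemidef := by
  rw [sd_psd_iff] at hA ⊢
  obtain ⟨h1, h2⟩ := hA
  constructor
  · intro i j; simp only [Matrix.smul_apply, smul_eq_mul]; rw [h1]
  · intro x
    have : ∑ i, x i * ∑ j, (c • A) i j * x j = c * ∑ i, x i * ∑ j, A i j * x j := by
      rw [Finset.mul_sum]
      refine Finset.sum_congr rfl fun i _ => ?_
      rw [Finset.mul_sum, Finset.mul_sum, Finset.mul_sum]
      refine Finset.sum_congr rfl fun j _ => ?_
      simp only [Matrix.smul_apply, smul_eq_mul]; ring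
    rw [this]
    exact mul_nonneg hc (h2 x)

private lemma sd_psd_convex :
    Convex ℝ {M : Fin (m+1) → Fin (m+1) → ℝ | (Matrix.of M).PosSemidef} := by
  intro A hA B hB a b ha hb _
  have h1 : Matrix.of (a • A + b • B) = a • Matrix.of A + b • Matrix.of B := rfl
  simp only [Set.mem_setOf_eq, h1]
  exact Matrix.PosSemidef.add (sd_psd_smul m hA ha) (sd_psd_smul m hB hb)

private lemma sd_rankone_psd (z : Fin (m+1) → ℝ) :
    (Matrix.of fun i j => z i * z j : Matrix (Fin (m+1)) (Fin (m+1)) ℝ).PosSemidef := by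
  rw [sd_psd_iff]
  constructor
  · intro i j; simp only [Matrix.of_apply]; ring
  · intro x
    have : ∑ i, x i * ∑ j, (Matrix.of fun i j => z i * z j : Matrix (Fin (m+1)) (Fin (m+1)) ℝ) i j * x j
        = (∑ i, x i * z i) * (∑ j, z j * x j) := by
      rw [Finset.sum_mul]
      refine Finset.sum_congr rfl fun i _ => ?_
      rw [Finset.mul_sum, Finset.mul_sum]
      refine Finset.sum_congr rfl fun j _ => ?_
      simp only [Matrix.of_apply]
      ring
    rw [this]
    have h2 : (∑ j, z j * x j) = ∑ i, x i * z i := Finset.sum_congr rfl fun i _ => mul_comm _ _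
    rw [h2]
    exact mul_self_nonneg _

private def sdmu (m : ℕ) (Q : Matrix (Fin (m+1)) (Fin (m+1)) ℝ) (k : ℕ) : ℝ :=
  ∑ l ∈ range (m+1), (l.choose k : ℝ) * (l.factorial : ℝ) * sdq m Q l

private lemma sd_constraint (m : ℕ) (Q : Matrix (Fin (m+1)) (Fin (m+1)) ℝ) :
    ∀ l ≤ m, sdq m Q l
      = ∑ k ∈ Icc l m, ((-1:ℝ)^(k+l) / (l.factorial : ℝ)) * (k.choose l : ℝ) * (sdmu m Q k) := by
  intro l hl
  have hfac : ((l.factorial : ℕ) : ℝ) ≠ 0 := by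
    have := Nat.factorial_pos l; positivity
  symm
  calc ∑ k ∈ Icc l m, ((-1:ℝ)^(k+l) / (l.factorial : ℝ)) * (k.choose l : ℝ) * (sdmu m Q k)
      = ∑ k ∈ range (m+1), ((-1:ℝ)^(k+l) / (l.factorial : ℝ)) * (k.choose l : ℝ) * (sdmu m Q k) := by
        apply Finset.sum_subset
        · intro k hk; simp only [mem_Icc, mem_range] at *; omega
        · intro k hk1 hk2
          simp only [mem_Icc, mem_range] at hk1 hk2
          have : k.choose l = 0 := Nat.choose_eq_zero_of_lt (by omega)
          simp [this]
    _ = ∑ k ∈ range (m+1), ∑ l' ∈ range (m+1),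
          ((-1:ℝ)^(k+l) * (l'.choose k : ℝ) * (k.choose l : ℝ))
            * (((l'.factorial : ℝ) / (l.factorial : ℝ)) * sdq m Q l') := by
        refine Finset.sum_congr rfl fun k _ => ?_
        rw [sdmu, Finset.mul_sum]
        refine Finset.sum_congr rfl fun l' _ => ?_
        field_simp
    _ = ∑ l' ∈ range (m+1),
          (∑ k ∈ range (m+1), (-1:ℝ)^(k+l) * (l'.choose k : ℝ) * (k.choose l : ℝ))
            * (((l'.factorial : ℝ) / (l.factorial : ℝ)) * sdq m Q l') := by
        rw [Finset.sum_comm]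
        refine Finset.sum_congr rfl fun l' _ => ?_
        rw [Finset.sum_mul]
    _ = ∑ l' ∈ range (m+1), (if l' = l then (1:ℝ) else 0)
            * (((l'.factorial : ℝ) / (l.factorial : ℝ)) * sdq m Q l') := by
        refine Finset.sum_congr rfl fun l' hl' => ?_
        simp only [mem_range] at hl'
        rw [sd_alt_id' l hl']
    _ = sdq m Q l := by
        have : ∀ l' ∈ range (m+1), (if l' = l then (1:ℝ) else 0)
            * (((l'.factorial : ℝ) / (l.factorial : ℝ)) * sdq m Q l')
            = if l' = l then ((l'.factorial : ℝ) / (l.factorial : ℝ)) * sdq m Q l' else 0 := by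
          intro l' _; split_ifs <;> ring
        rw [Finset.sum_congr rfl this,
          Finset.sum_ite_eq' (range (m+1)) l
            (fun l' => ((l'.factorial : ℝ) / (l.factorial : ℝ)) * sdq m Q l'),
          if_pos (Finset.mem_range.mpr (by omega))]
        rw [div_self hfac, one_mul]
-- appended part 1: primal characterization
private lemma sd_sumF (m l : ℕ) (hl : l ≤ m) (F : ℕ → ℝ) :
    ∑ k : Fin (m+1), F k.1 * (l.choose k.1 : ℝ) * (l.factorial : ℝ)
      = ∑ k ∈ range (l+1), F k * (l.choose k : ℝ) * (l.factorial : ℝ) := by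
  rw [Fin.sum_univ_eq_sum_range (fun k => F k * (l.choose k : ℝ) * (l.factorial : ℝ)) (m+1)]
  symm
  apply Finset.sum_subset
  · intro k hk; simp only [mem_range] at *; omega
  · intro k hk1 hk2
    simp only [mem_range] at hk1 hk2
    have : l.choose k = 0 := Nat.choose_eq_zero_of_lt (by omega)
    simp [this]

private lemma sd_primal_iff (m n : ℕ) (hn : 1 ≤ n) (hmn : n ≤ m) (v : ℝ) :
    (∃ (A : Matrix (Fin (m + 1)) (Fin (m + 1)) ℝ) (F : ℕ → ℝ),
      A.PosSemidef ∧
      (∑ k ∈ Finset.range (m + 1), F k) = 1 ∧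
      (∀ k ≤ m, 0 ≤ F k) ∧
      (∀ (i j : Fin (m + 1)) (l : ℕ), i.val + j.val = 2 * l →
        A i j = ∑ k ∈ Finset.range (l + 1),
          F k * (l.choose k : ℝ) * (l.factorial : ℝ)) ∧
      (∀ i j : Fin (m + 1), (i.val + j.val) % 2 = 1 → A i j = 0) ∧
      v = F n)
    ↔ (∃ x ∈ stdSimplex ℝ (Fin (m+1)), (sdM m x).PosSemidef ∧ v = x ⟨n, by omega⟩) := by
  constructor
  · rintro ⟨A, F, hA, h1, h2, h3, h4, h5⟩
    refine ⟨fun k => F k.1, ⟨fun k => h2 k.1 (by omega), ?_⟩, ?_, ?_⟩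
    · rw [Fin.sum_univ_eq_sum_range F (m+1)]; exact h1
    · have hAeq : sdM m (fun k => F k.1) = A := by
        ext i j
        rw [sdM_apply]
        by_cases hp : (i.1+j.1) % 2 = 0
        · rw [if_pos hp, h3 i j ((i.1+j.1)/2) (by omega)]
          exact sd_sumF m ((i.1+j.1)/2) (by omega) F
        · rw [if_neg hp]
          exact (h4 i j (by omega)).symm
      rw [hAeq]; exact hA
    · exact h5
  · rintro ⟨x, hx, hpsd, hv⟩
    refine ⟨sdM m x, fun k => if h : k < m+1 then x ⟨k, h⟩ else 0, hpsd, ?_, ?_, ?_, ?_, ?_⟩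
    · rw [← Fin.sum_univ_eq_sum_range (fun k => if h : k < m+1 then x ⟨k, h⟩ else 0) (m+1)]
      calc ∑ k : Fin (m+1), (if h : (k:ℕ) < m+1 then x ⟨k.1, h⟩ else 0)
          = ∑ k : Fin (m+1), x k := by
            refine Finset.sum_congr rfl fun k _ => ?_
            rw [dif_pos k.2]
        _ = 1 := hx.2
    · intro k hk
      simp only []
      rw [dif_pos (show k < m+1 by omega)]
      exact hx.1 _
    · intro i j l hijl
      rw [sdM_apply, if_pos (by omega), show (i.1+j.1)/2 = l by omega]
      have hlm : l ≤ m := by have := i.2; have := j.2; omega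
      calc ∑ k : Fin (m+1), x k * (l.choose k.1 : ℝ) * (l.factorial : ℝ)
          = ∑ k : Fin (m+1), (if h : (k:ℕ) < m+1 then x ⟨k.1, h⟩ else 0)
              * (l.choose k.1 : ℝ) * (l.factorial : ℝ) := by
            refine Finset.sum_congr rfl fun k _ => ?_
            rw [dif_pos k.2]
        _ = _ := sd_sumF m l hlm (fun k => if h : k < m+1 then x ⟨k, h⟩ else 0)
    · intro i j hij
      rw [sdM_apply, if_neg (by omega)]
    · simp only []
      rw [hv, dif_pos (show n < m+1 by omega)]

private lemma sdM_symm (m : ℕ) (x : Fin (m+1) → ℝ) (i j : Fin (m+1)) :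
    sdM m x i j = sdM m x j i := by
  rw [sdM_apply, sdM_apply, Nat.add_comm j.1 i.1]

private lemma sd_pull {β : Type*} [Fintype β] (c d : ℝ) (g h : β → β → ℝ) :
    ∑ i : β, ∑ j : β, c * (d * (g i j + h i j))
      = c * (d * ((∑ i : β, ∑ j : β, g i j) + (∑ i : β, ∑ j : β, h i j))) := by
  rw [← Finset.sum_add_distrib, Finset.mul_sum, Finset.mul_sum]
  refine Finset.sum_congr rfl fun i _ => ?_
  rw [← Finset.sum_add_distrib, Finset.mul_sum, Finset.mul_sum]

/-- strong duality between the semidefinite relaxation `(SDP^{m,≥}_n)`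
and its dual `(D-SDP^{m,≥}_n)`: the supremum of `F_n` over primal feasible pairs `(A, F)`
equals the infimum of `y` over dual feasible triples `(Q, μ, y)`. -/
theorem strong_duality_relaxation (m n : ℕ) (hn : 1 ≤ n) (hmn : n ≤ m) :
    sSup {v : ℝ | ∃ (A : Matrix (Fin (m + 1)) (Fin (m + 1)) ℝ) (F : ℕ → ℝ),
      A.PosSemidef ∧
      (∑ k ∈ Finset.range (m + 1), F k) = 1 ∧
      (∀ k ≤ m, 0 ≤ F k) ∧
      (∀ (i j : Fin (m + 1)) (l : ℕ), i.val + j.val = 2 * l →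
        A i j = ∑ k ∈ Finset.range (l + 1),
          F k * (l.choose k : ℝ) * (l.factorial : ℝ)) ∧
      (∀ i j : Fin (m + 1), (i.val + j.val) % 2 = 1 → A i j = 0) ∧
      v = F n} =
    sInf {y : ℝ | ∃ (Q : Matrix (Fin (m + 1)) (Fin (m + 1)) ℝ) (μ : ℕ → ℝ),
      Q.PosSemidef ∧
      1 + μ n ≤ y ∧
      (∀ k ≤ m, μ k ≤ y) ∧
      (∀ l ≤ m,
        (∑ i : Fin (m + 1), ∑ j : Fin (m + 1),
          if i.val + j.val = 2 * l then Q i j else 0)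
        = ∑ k ∈ Finset.Icc l m,
            ((-1 : ℝ) ^ (k + l) / (l.factorial : ℝ)) * (k.choose l : ℝ) * μ k)} := by
  classical
  set n' : Fin (m+1) := ⟨n, by omega⟩ with hn'def
  set Pset : Set ℝ := {v : ℝ | ∃ (A : Matrix (Fin (m + 1)) (Fin (m + 1)) ℝ) (F : ℕ → ℝ),
      A.PosSemidef ∧
      (∑ k ∈ Finset.range (m + 1), F k) = 1 ∧
      (∀ k ≤ m, 0 ≤ F k) ∧
      (∀ (i j : Fin (m + 1)) (l : ℕ), i.val + j.val = 2 * l →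
        A i j = ∑ k ∈ Finset.range (l + 1),
          F k * (l.choose k : ℝ) * (l.factorial : ℝ)) ∧
      (∀ i j : Fin (m + 1), (i.val + j.val) % 2 = 1 → A i j = 0) ∧
      v = F n} with hPdef
  set Dset : Set ℝ := {y : ℝ | ∃ (Q : Matrix (Fin (m + 1)) (Fin (m + 1)) ℝ) (μ : ℕ → ℝ),
      Q.PosSemidef ∧
      1 + μ n ≤ y ∧
      (∀ k ≤ m, μ k ≤ y) ∧
      (∀ l ≤ m,
        (∑ i : Fin (m + 1), ∑ j : Fin (m + 1),
          if i.val + j.val = 2 * l then Q i j else 0)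
        = ∑ k ∈ Finset.Icc l m,
            ((-1 : ℝ) ^ (k + l) / (l.factorial : ℝ)) * (k.choose l : ℝ) * μ k)} with hDdef
  have hPiff : ∀ v : ℝ, v ∈ Pset ↔
      ∃ x ∈ stdSimplex ℝ (Fin (m+1)), (sdM m x).PosSemidef ∧ v = x n' := by
    intro v
    exact sd_primal_iff m n hn hmn v
  -- basic members
  have h0P : (0:ℝ) ∈ Pset := by
    rw [hPiff]
    refine ⟨sde m ⟨0, by omega⟩, sde_mem m _, sdA0_psd m, ?_⟩
    unfold sde
    rw [if_neg (show n' ≠ ⟨0, by omega⟩ from Fin.ne_of_val_ne (by simp [hn'def]; omega))]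
  have hPub : ∀ v ∈ Pset, v ≤ 1 := by
    intro v hv
    obtain ⟨x, hx, _, rfl⟩ := (hPiff v).mp hv
    calc x n' ≤ ∑ k : Fin (m+1), x k :=
          Finset.single_le_sum (fun k _ => hx.1 k) (Finset.mem_univ n')
      _ = 1 := hx.2
  have hPne : Pset.Nonempty := ⟨0, h0P⟩
  have hPbdd : BddAbove Pset := ⟨1, hPub⟩
  have h1D : (1:ℝ) ∈ Dset := by
    refine ⟨0, 0, Matrix.PosSemidef.zero, by norm_num, fun k _ => by norm_num, fun l hl => ?_⟩
    simp
  have hDne : Dset.Nonempty := ⟨1, h1D⟩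
  have hweak : ∀ v ∈ Pset, ∀ y ∈ Dset, v ≤ y := by
    intro v hv y hy
    obtain ⟨x, hx, hpsd, rfl⟩ := (hPiff v).mp hv
    obtain ⟨Q, μ, hQ, hy1, hy2, hc⟩ := hy
    exact sd_weak m n hn hmn x hx hpsd Q μ y hQ hy1 hy2 hc
  have hDbdd : BddBelow Dset := ⟨0, fun y hy => hweak 0 h0P y hy⟩
  apply le_antisymm
  · exact csSup_le hPne fun v hv => le_csInf hDne fun y hy => hweak v hv y hy
  · apply le_of_forall_pos_le_add
    intro ε hε
    set v := sSup Pset with hvdef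
    suffices hmem : (v + ε) ∈ Dset by exact csInf_le hDbdd hmem
    -- separation setup
    set Φ : (Fin (m+1) → ℝ) → sdE m := fun x => (fun i j => sdM m x i j, x n') with hΦdef
    have hΦlin : IsLinearMap ℝ Φ := by
      constructor
      · intro a b
        apply Prod.ext
        · funext i j
          show sdM m (a + b) i j = sdM m a i j + sdM m b i j
          rw [sdM_apply, sdM_apply, sdM_apply]
          by_cases hp : (i.1+j.1) % 2 = 0
          · rw [if_pos hp, if_pos hp, if_pos hp, ← Finset.sum_add_distrib]
            refine Finset.sum_congr rfl fun k _ => ?_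
            simp only [Pi.add_apply]; ring
          · rw [if_neg hp, if_neg hp, if_neg hp]; ring
        · show (a + b) n' = a n' + b n'
          simp
      · intro c a
        apply Prod.ext
        · funext i j
          show sdM m (c • a) i j = c * sdM m a i j
          rw [sdM_apply, sdM_apply]
          by_cases hp : (i.1+j.1) % 2 = 0
          · rw [if_pos hp, if_pos hp, Finset.mul_sum]
            refine Finset.sum_congr rfl fun k _ => ?_
            simp only [Pi.smul_apply, smul_eq_mul]; ring
          · rw [if_neg hp, if_neg hp]; ring
        · show (c • a) n' = c * a n'
          simp
    have hΦcont : Continuous Φ := by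
      apply Continuous.prodMk
      · apply continuous_pi; intro i; apply continuous_pi; intro j
        show Continuous fun x => sdM m x i j
        simp only [sdM_apply]
        by_cases hp : (i.1+j.1) % 2 = 0
        · simp only [if_pos hp]
          exact continuous_finset_sum _ fun k _ =>
            ((continuous_apply k).mul continuous_const).mul continuous_const
        · simp only [if_neg hp]; exact continuous_const
      · exact continuous_apply n'
    set Cs : Set (sdE m) := Φ '' (stdSimplex ℝ (Fin (m+1))) with hCdef
    set Ts : Set (sdE m) :=
      ({M : Fin (m+1) → Fin (m+1) → ℝ | (Matrix.of M).PosSemidef}) ×ˢ (Set.Ici (v+ε)) with hTdef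
    have hCconv : Convex ℝ Cs := (convex_stdSimplex ℝ _).is_linear_image hΦlin
    have hCcomp : IsCompact Cs := (isCompact_stdSimplex ℝ _).image hΦcont
    have hTconv : Convex ℝ Ts := (sd_psd_convex m).prod (convex_Ici _)
    have hTclosed : IsClosed Ts := (sd_psd_closed m).prod isClosed_Ici
    have hdisj : Disjoint Cs Ts := by
      rw [Set.disjoint_left]
      rintro p ⟨x, hx, rfl⟩ hpT
      obtain ⟨hT1, hT2⟩ := hpT
      have hx_mem : x n' ∈ Pset := (hPiff _).mpr ⟨x, hx, hT1, rfl⟩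
      have h1 : x n' ≤ v := le_csSup hPbdd hx_mem
      have h2 : v + ε ≤ x n' := hT2
      linarith
    obtain ⟨f, u, w, hfu, huw, hwT⟩ :=
      geometric_hahn_banach_compact_closed hCconv hCcomp hTconv hTclosed hdisj
    set α : ℝ := f (0,1) with hαdef
    set pair : Matrix (Fin (m+1)) (Fin (m+1)) ℝ → ℝ :=
      fun S => ∑ i : Fin (m+1), ∑ j : Fin (m+1),
        S i j * f (Pi.single i (Pi.single j 1), 0) with hpairdef
    have hfp : ∀ p : sdE m, f p = pair (Matrix.of p.1) + p.2 * α := fun p => sd_rep m f p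
    have hpair0 : pair 0 = 0 := by simp [hpairdef]
    have hpair_smul : ∀ (t : ℝ) (S : Matrix (Fin (m+1)) (Fin (m+1)) ℝ),
        pair (t • S) = t * pair S := by
      intro t S
      rw [hpairdef]
      simp only [Matrix.smul_apply, smul_eq_mul]
      rw [Finset.mul_sum]
      refine Finset.sum_congr rfl fun i _ => ?_
      rw [Finset.mul_sum]
      refine Finset.sum_congr rfl fun j _ => ?_
      ring
    -- T side
    have hT : ∀ (S : Matrix (Fin (m+1)) (Fin (m+1)) ℝ), S.PosSemidef →
        ∀ r, v + ε ≤ r → w < pair S + r * α := by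
      intro S hS r hr
      have hmemT : ((fun i j => S i j, r) : sdE m) ∈ Ts := by
        refine Set.mk_mem_prod ?_ hr
        show (Matrix.of fun i j => S i j).PosSemidef
        exact hS
      have := hwT _ hmemT
      rwa [hfp] at this
    have hα : 0 ≤ α := by
      by_contra hcon
      push_neg at hcon
      have h1 := hT 0 Matrix.PosSemidef.zero (max (v+ε) ((w-1)/α)) (le_max_left _ _)
      rw [hpair0, zero_add] at h1
      have h2 : max (v+ε) ((w-1)/α) * α ≤ w - 1 := by
        have hle := le_max_right (v+ε) ((w-1)/α)
        have := mul_le_mul_of_nonpos_right hle (le_of_lt hcon)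
        rwa [div_mul_cancel₀ _ (ne_of_lt hcon)] at this
      linarith
    have hQ0pos : ∀ S : Matrix (Fin (m+1)) (Fin (m+1)) ℝ, S.PosSemidef → 0 ≤ pair S := by
      intro S hS
      by_contra hcon
      push_neg at hcon
      set t := max 1 ((w - (v+ε)*α)/(pair S)) with htdef
      have ht0 : (0:ℝ) ≤ t := le_trans zero_le_one (le_max_left _ _)
      have h1 := hT (t • S) (sd_psd_smul m hS ht0) (v+ε) le_rfl
      rw [hpair_smul] at h1
      have h2 : t * pair S ≤ w - (v+ε)*α := by
        have hle := le_max_right 1 ((w - (v+ε)*α)/(pair S))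
        have := mul_le_mul_of_nonpos_right hle (le_of_lt hcon)
        rwa [div_mul_cancel₀ _ (ne_of_lt hcon)] at this
      linarith
    -- C side
    have hCside : ∀ x ∈ stdSimplex ℝ (Fin (m+1)), pair (sdM m x) + x n' * α < u := by
      intro x hx
      have := hfu (Φ x) ⟨x, hx, rfl⟩
      rwa [hfp] at this
    have hw2 : w < (v+ε) * α := by
      have := hT 0 Matrix.PosSemidef.zero (v+ε) le_rfl
      rwa [hpair0, zero_add] at this
    have hαpos : 0 < α := by
      rcases lt_or_eq_of_le hα with h | heq
      · exact h
      exfalso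
      have h1 := hCside (sde m ⟨0, by omega⟩) (sde_mem m _)
      have h2 : 0 ≤ pair (sdM m (sde m ⟨0, by omega⟩)) := hQ0pos _ (sdA0_psd m)
      rw [← heq, mul_zero, add_zero] at h1
      rw [← heq, mul_zero] at hw2
      linarith
    -- symmetrized scaled dual matrix
    set Q0 : Matrix (Fin (m+1)) (Fin (m+1)) ℝ :=
      Matrix.of fun i j => f (Pi.single i (Pi.single j 1), 0) with hQ0def
    have hpairQ0 : ∀ S : Matrix (Fin (m+1)) (Fin (m+1)) ℝ,
        pair S = ∑ i : Fin (m+1), ∑ j : Fin (m+1), S i j * Q0 i j := fun S => rfl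
    set Q1 : Matrix (Fin (m+1)) (Fin (m+1)) ℝ :=
      Matrix.of fun i j => α⁻¹ * (2⁻¹ * (Q0 i j + Q0 j i)) with hQ1def
    have hQ1apply : ∀ i j, Q1 i j = α⁻¹ * (2⁻¹ * (Q0 i j + Q0 j i)) := fun i j => rfl
    have hQ1quad : ∀ z : Fin (m+1) → ℝ,
        ∑ i : Fin (m+1), z i * ∑ j : Fin (m+1), Q1 i j * z j
          = α⁻¹ * pair (Matrix.of fun i j => z i * z j) := by
      intro z
      have e2 : ∑ i : Fin (m+1), ∑ j : Fin (m+1), (z i * z j) * Q0 j i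
          = ∑ i : Fin (m+1), ∑ j : Fin (m+1), (z i * z j) * Q0 i j := by
        rw [Finset.sum_comm]
        refine Finset.sum_congr rfl fun i _ => Finset.sum_congr rfl fun j _ => ?_
        ring
      calc ∑ i : Fin (m+1), z i * ∑ j : Fin (m+1), Q1 i j * z j
          = ∑ i : Fin (m+1), ∑ j : Fin (m+1),
              α⁻¹ * (2⁻¹ * ((z i * z j) * Q0 i j + (z i * z j) * Q0 j i)) := by
            refine Finset.sum_congr rfl fun i _ => ?_
            rw [Finset.mul_sum]
            refine Finset.sum_congr rfl fun j _ => ?_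
            rw [hQ1apply]; ring
        _ = α⁻¹ * (2⁻¹ * ((∑ i : Fin (m+1), ∑ j : Fin (m+1), (z i * z j) * Q0 i j)
              + (∑ i : Fin (m+1), ∑ j : Fin (m+1), (z i * z j) * Q0 j i))) :=
            sd_pull α⁻¹ 2⁻¹ _ _
        _ = α⁻¹ * pair (Matrix.of fun i j => z i * z j) := by
            rw [e2, hpairQ0]
            simp only [Matrix.of_apply]
            ring
    have hQ1psd : Q1.PosSemidef := by
      rw [sd_psd_iff]
      constructor
      · intro i j; rw [hQ1apply, hQ1apply]; ring
      · intro z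
        rw [hQ1quad z]
        exact mul_nonneg (inv_nonneg.mpr hα) (hQ0pos _ (sd_rankone_psd m z))
    have hQ1pair : ∀ x : Fin (m+1) → ℝ,
        (∑ i : Fin (m+1), ∑ j : Fin (m+1), Q1 i j * sdM m x i j)
          = α⁻¹ * pair (sdM m x) := by
      intro x
      have e2 : ∑ i : Fin (m+1), ∑ j : Fin (m+1), sdM m x i j * Q0 j i
          = ∑ i : Fin (m+1), ∑ j : Fin (m+1), sdM m x i j * Q0 i j := by
        rw [Finset.sum_comm]
        refine Finset.sum_congr rfl fun i _ => Finset.sum_congr rfl fun j _ => ?_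
        rw [sdM_symm m x j i]
      calc ∑ i : Fin (m+1), ∑ j : Fin (m+1), Q1 i j * sdM m x i j
          = ∑ i : Fin (m+1), ∑ j : Fin (m+1),
              α⁻¹ * (2⁻¹ * (sdM m x i j * Q0 i j + sdM m x i j * Q0 j i)) := by
            refine Finset.sum_congr rfl fun i _ => Finset.sum_congr rfl fun j _ => ?_
            rw [hQ1apply]; ring
        _ = α⁻¹ * (2⁻¹ * ((∑ i : Fin (m+1), ∑ j : Fin (m+1), sdM m x i j * Q0 i j)
              + (∑ i : Fin (m+1), ∑ j : Fin (m+1), sdM m x i j * Q0 j i))) :=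
            sd_pull α⁻¹ 2⁻¹ _ _
        _ = α⁻¹ * pair (sdM m x) := by
            rw [e2, hpairQ0]
            ring
    -- μ values
    have hμ : ∀ k : Fin (m+1), sdmu m Q1 k.1 = α⁻¹ * pair (sdM m (sde m k)) := by
      intro k
      have hp := sd_pair m Q1 (sde m k)
      have hinner : ∀ l : ℕ,
          (∑ k' : Fin (m+1), sde m k k' * (l.choose k'.1 : ℝ) * (l.factorial : ℝ))
            = (l.choose k.1 : ℝ) * (l.factorial : ℝ) := by
        intro l
        rw [Finset.sum_eq_single k]
        · simp [sde]
        · intro b _ hb; simp [sde, hb]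
        · intro hk; exact absurd (Finset.mem_univ k) hk
      calc sdmu m Q1 k.1
          = ∑ l ∈ range (m+1), (l.choose k.1 : ℝ) * (l.factorial : ℝ) * sdq m Q1 l := rfl
        _ = ∑ l ∈ range (m+1), sdq m Q1 l
              * (∑ k' : Fin (m+1), sde m k k' * (l.choose k'.1 : ℝ) * (l.factorial : ℝ)) := by
            refine Finset.sum_congr rfl fun l _ => ?_
            rw [hinner l]; ring
        _ = ∑ i : Fin (m+1), ∑ j : Fin (m+1), Q1 i j * sdM m (sde m k) i j := hp.symm
        _ = α⁻¹ * pair (sdM m (sde m k)) := hQ1pair _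
    have hbound : ∀ k : Fin (m+1), sdmu m Q1 k.1 < (v + ε) - (sde m k) n' := by
      intro k
      have h1 := hCside (sde m k) (sde_mem m k)
      have h2 : pair (sdM m (sde m k)) < α * ((v+ε) - (sde m k) n') := by nlinarith
      rw [hμ k]
      calc α⁻¹ * pair (sdM m (sde m k)) < α⁻¹ * (α * ((v+ε) - (sde m k) n')) := by
            exact mul_lt_mul_of_pos_left h2 (inv_pos.mpr hαpos)
        _ = (v+ε) - (sde m k) n' := by
            field_simp
    have hyk : ∀ k ≤ m, sdmu m Q1 k ≤ v + ε := by
      intro k hk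
      have := hbound ⟨k, by omega⟩
      have hnn : (0:ℝ) ≤ sde m ⟨k, by omega⟩ n' := (sde_mem m _).1 n'
      simp only [] at this
      linarith
    have hyn : 1 + sdmu m Q1 n ≤ v + ε := by
      have := hbound n'
      have hone : sde m n' n' = 1 := by simp [sde]
      rw [hone] at this
      linarith
    exact ⟨Q1, sdmu m Q1, hQ1psd, hyn, hyk, fun l hl => sd_constraint m Q1 l hl⟩
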